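/- For every finite graph G on at least 2 vertices, the location-domination numbers of G and of its complement differ by at most 1: |λ(G) − λ(Ḡ)| ≤ 1. -/

import Mathlib

noncomputable section
open Classical

variable {V : Type*}

/-- `S` is a distinguishing set of `G`. -/
def IsDistinguishing (G : SimpleGraph V) (S : Set V) : Prop :=
  ∀ u ∉ S, ∀ v ∉ S, u ≠ v → G.neighborSet u ∩ S ≠ G.neighborSet v ∩ S

/-- `S` is a dominating set of `G`. -/
def IsDominating (G : SimpleGraph V) (S : Set V) : Prop :=
  ∀ v ∉ S, ∃ u ∈ S, G.Adj v u

/-- `S` is a locating-dominating set of `G`. -/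
def IsLD (G : SimpleGraph V) (S : Set V) : Prop :=
  IsDistinguishing G S ∧ IsDominating G S

/-- The location-domination number of `G`. -/
def ldNum (G : SimpleGraph V) : ℕ :=
  sInf {n | ∃ S : Set V, S.ncard = n ∧ IsLD G S}

/-- The graph `G^S` associated with a distinguishing set `S`:
vertices outside `S` are adjacent iff their neighborhoods in `S`
differ in exactly one vertex (the label of the edge). -/
def assocGraph (G : SimpleGraph V) (S : Set V) : SimpleGraph V where
  Adj x y := x ∉ S ∧ y ∉ S ∧
    ∃ u, symmDiff (G.neighborSet x ∩ S) (G.neighborSet y ∩ S) = {u}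
  symm := by
    constructor
    rintro x y ⟨hx, hy, u, hu⟩
    exact ⟨hy, hx, u, by rwa [symmDiff_comm]⟩
  loopless := by
    constructor
    rintro x ⟨-, -, u, hu⟩
    rw [symmDiff_self] at hu
    exact (Set.singleton_ne_empty u) (by simpa using hu.symm)

/-- The edge `e` of `G^S` has label `u`. -/
def edgeLabelIs (G : SimpleGraph V) (S : Set V) (u : V) (e : Sym2 V) : Prop :=
  Sym2.lift ⟨fun x y => symmDiff (G.neighborSet x ∩ S) (G.neighborSet y ∩ S) = {u},
    fun x y => by simp only []; rw [symmDiff_comm]⟩ e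

/-- The number of edges with label `u` in a list of edges (e.g. of a walk in `G^S`). -/
def labelCount (G : SimpleGraph V) (S : Set V) (u : V) (l : List (Sym2 V)) : ℕ :=
  l.countP fun e => decide (edgeLabelIs G S u e)

/-- No edge of `H` lies on two distinct cycles: any two cycles sharing an edge
have the same edge set.  (This says precisely that every connected component of
`H` is a cactus.) -/
def NoEdgeOnTwoCycles {α : Type*} (H : SimpleGraph α) : Prop :=
  ∀ (x y : α) (p : H.Walk x x) (q : H.Walk y y), p.IsCycle → q.IsCycle →
    ∀ e ∈ p.edges, e ∈ q.edges → ∀ e', e' ∈ p.edges ↔ e' ∈ q.edges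

/-- A cactus is a connected graph in which no edge lies on two distinct cycles. -/
def IsCactus {α : Type*} (H : SimpleGraph α) : Prop :=
  H.Connected ∧ NoEdgeOnTwoCycles H

/-- `x` and `y` are twins in `G`. -/
def Twins (G : SimpleGraph V) (x y : V) : Prop :=
  G.neighborSet x = G.neighborSet y ∨
    G.neighborSet x ∪ {x} = G.neighborSet y ∪ {y}

/-- `x` and `y` are twins in the vertex-deleted graph `G - u`. -/
def TwinsAvoid (G : SimpleGraph V) (u x y : V) : Prop :=
  G.neighborSet x \ {u} = G.neighborSet y \ {u} ∨
    (G.neighborSet x ∪ {x}) \ {u} = (G.neighborSet y ∪ {y}) \ {u}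

/-- `U, W` is a bipartition of `G` into two stable (independent) sets. -/
def BipartitionOf (G : SimpleGraph V) (U W : Set V) : Prop :=
  U ∪ W = Set.univ ∧ Disjoint U W ∧
    (∀ x ∈ U, ∀ y ∈ U, ¬ G.Adj x y) ∧ (∀ x ∈ W, ∀ y ∈ W, ¬ G.Adj x y)

lemma compl_nbhd_inter {G : SimpleGraph V} {S : Set V} {u : V} (hu : u ∉ S) :
    Gᶜ.neighborSet u ∩ S = S \ (G.neighborSet u ∩ S) := by
  ext x
  simp only [Set.mem_inter_iff, SimpleGraph.mem_neighborSet, SimpleGraph.compl_adj,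
    Set.mem_diff]
  constructor
  · rintro ⟨⟨hne, hna⟩, hx⟩; exact ⟨hx, fun h => hna h.1⟩
  · rintro ⟨hx, hna⟩
    exact ⟨⟨fun h => hu (h ▸ hx), fun h => hna ⟨h, hx⟩⟩, hx⟩

lemma distinguishing_compl {G : SimpleGraph V} {S : Set V}
    (hS : IsDistinguishing G S) : IsDistinguishing Gᶜ S := by
  intro u hu v hv huv heq
  apply hS u hu v hv huv
  rw [compl_nbhd_inter hu, compl_nbhd_inter hv] at heq
  have h1 : G.neighborSet u ∩ S ⊆ S := Set.inter_subset_right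
  have h2 : G.neighborSet v ∩ S ⊆ S := Set.inter_subset_right
  rw [← Set.diff_diff_cancel_left h1, heq, Set.diff_diff_cancel_left h2]

lemma exists_LD_compl [Fintype V] {G : SimpleGraph V} {S : Set V} (hS : IsLD G S) :
    ∃ T : Set V, T.ncard ≤ S.ncard + 1 ∧ IsLD Gᶜ T := by
  by_cases hv : ∃ v, v ∉ S ∧ G.neighborSet v ∩ S = S
  · obtain ⟨v, hvS, hvN⟩ := hv
    refine ⟨insert v S, ?_, ?_, ?_⟩
    · exact Set.ncard_insert_le _ _
    · -- distinguishing
      intro u hu w hw huw heq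
      have hu' : u ∉ S := fun h => hu (Set.mem_insert_of_mem _ h)
      have hw' : w ∉ S := fun h => hw (Set.mem_insert_of_mem _ h)
      apply distinguishing_compl hS.1 u hu' w hw' huw
      have key : ∀ A : Set V, A ∩ insert v S ∩ S = A ∩ S := fun A => by
        rw [Set.inter_assoc, Set.inter_eq_right.mpr (Set.subset_insert v S)]
      have := congrArg (· ∩ S) heq
      simpa only [key] using this
    · -- dominating
      intro w hw
      have hw' : w ∉ S := fun h => hw (Set.mem_insert_of_mem _ h)
      have hwv : w ≠ v := fun h => hw (h ▸ Set.mem_insert _ _)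
      have hne := hS.1 w hw' v hvS hwv
      rw [hvN] at hne
      have hsub : G.neighborSet w ∩ S ⊆ S := Set.inter_subset_right
      obtain ⟨s, hsS, hsN⟩ := Set.exists_of_ssubset (hsub.ssubset_of_ne hne)
      refine ⟨s, Set.mem_insert_of_mem _ hsS, ?_, fun hadj => hsN ⟨hadj, hsS⟩⟩
      exact fun h => hw' (h ▸ hsS)
  · push_neg at hv
    refine ⟨S, le_self_add, distinguishing_compl hS.1, ?_⟩
    intro w hw
    have hne := hv w hw
    have hsub : G.neighborSet w ∩ S ⊆ S := Set.inter_subset_right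
    obtain ⟨s, hsS, hsN⟩ := Set.exists_of_ssubset (hsub.ssubset_of_ne hne)
    refine ⟨s, hsS, fun h => hw (h ▸ hsS), fun hadj => hsN ⟨hadj, hsS⟩⟩

lemma ldNum_mem [Fintype V] (G : SimpleGraph V) :
    ∃ S : Set V, S.ncard = ldNum G ∧ IsLD G S := by
  have hne : {n | ∃ S : Set V, S.ncard = n ∧ IsLD G S}.Nonempty :=
    ⟨(Set.univ : Set V).ncard, Set.univ, rfl,
      fun u hu => absurd (Set.mem_univ u) hu,
      fun u hu => absurd (Set.mem_univ u) hu⟩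
  exact Nat.sInf_mem hne

lemma ldNum_compl_le [Fintype V] (G : SimpleGraph V) :
    ldNum Gᶜ ≤ ldNum G + 1 := by
  obtain ⟨S, hcard, hLD⟩ := ldNum_mem G
  obtain ⟨T, hT, hTLD⟩ := exists_LD_compl hLD
  exact le_trans (Nat.sInf_le ⟨T, rfl, hTLD⟩) (hcard ▸ hT)

theorem ldNum_compl_diff_le_one [Fintype V] (G : SimpleGraph V)
    (h : 2 ≤ Fintype.card V) :
    |(ldNum G : ℤ) - (ldNum Gᶜ : ℤ)| ≤ 1 := by
  have h1 := ldNum_compl_le G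
  have h2 := ldNum_compl_le Gᶜ
  rw [compl_compl] at h2
  rw [abs_le]
  omega

end
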